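/- arXiv:2503.01920 — 6 statements merged into one kernel-verified Lean document; each statement's English description precedes it below -/
import Mathlib

section
/- For every partition λ of d ≥ 1, κ_λ ≤ d(d−1), with equality if and only if λ = (d) is the one-row partition. -/
/-- `κ_λ = Σ_i λ_i (λ_i - 2 i + 1)` for a partition given as a list (1-indexed rows). -/
def kappa (l : List ℤ) : ℤ :=
  ∑ i : Fin l.length, l.get i * (l.get i - 2 * ((i.val : ℤ) + 1) + 1)

/-- A list of integers represents a partition if it is weakly decreasing and all parts
are positive. -/
def IsPartition (l : List ℤ) : Prop :=
  l.Pairwise (· ≥ ·) ∧ ∀ x ∈ l, 0 < x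

/-- For every partition `λ` of `d ≥ 1`, `κ_λ ≤ d(d-1)`, with equality iff `λ = (d)`. -/
theorem kappa_le_of_partition (d : ℕ) (hd : 1 ≤ d) (l : List ℤ)
    (hl : IsPartition l) (hsum : l.sum = (d : ℤ)) :
    kappa l ≤ (d : ℤ) * (d - 1) ∧ (kappa l = (d : ℤ) * (d - 1) ↔ l = [(d : ℤ)]) := by
  obtain ⟨hsort, hpos⟩ := hl
  have posg : ∀ i : Fin l.length, 0 < l.get i := fun i => hpos _ (l.get_mem i)
  have hle : ∀ i : Fin l.length, l.get i ≤ (d : ℤ) := by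
    intro i
    rw [← hsum]
    exact List.single_le_sum (fun x hx => le_of_lt (hpos x hx)) _ (l.get_mem i)
  have hsum' : ∑ i : Fin l.length, l.get i = (d : ℤ) := by
    rw [← hsum]
    simp
  -- the "index-weighted" sum is at least d
  have hT : (d : ℤ) ≤ ∑ i : Fin l.length, (2 * (i.val : ℤ) + 1) * l.get i := by
    rw [← hsum']
    refine Finset.sum_le_sum fun i _ => ?_
    have h1 := posg i
    have h2 : (0 : ℤ) ≤ (i.val : ℤ) := Int.natCast_nonneg _
    nlinarith
  -- main bound
  have hmain : kappa l ≤ (d : ℤ) * d - ∑ i : Fin l.length, (2 * (i.val : ℤ) + 1) * l.get i := by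
    have : kappa l ≤ ∑ i : Fin l.length,
        ((d : ℤ) * l.get i - (2 * (i.val : ℤ) + 1) * l.get i) := by
      refine Finset.sum_le_sum fun i _ => ?_
      have h1 := posg i
      have h2 := hle i
      nlinarith
    calc kappa l ≤ _ := this
      _ = (d : ℤ) * d - ∑ i : Fin l.length, (2 * (i.val : ℤ) + 1) * l.get i := by
          rw [Finset.sum_sub_distrib, ← Finset.mul_sum, hsum']
  have hdd : (d : ℤ) * (d - 1) = (d : ℤ) * d - d := by ring
  have h1 : kappa l ≤ (d : ℤ) * (d - 1) := by linarith
  refine ⟨h1, ?_, ?_⟩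
  · intro heq
    -- length must be exactly 1
    have hlen : l.length = 1 := by
      rcases Nat.lt_or_ge l.length 2 with h2 | h2
      · have h0 : l.length = 0 ∨ l.length = 1 := by omega
        rcases h0 with h0 | h0
        · exfalso
          rw [List.length_eq_zero_iff] at h0
          rw [h0] at hsum
          simp at hsum
          omega
        · exact h0
      · exfalso
        -- strict inequality on the weighted sum
        have hstrict : (d : ℤ) < ∑ i : Fin l.length, (2 * (i.val : ℤ) + 1) * l.get i := by
          rw [← hsum']
          refine Finset.sum_lt_sum (fun i _ => ?_) ⟨⟨1, by omega⟩, Finset.mem_univ _, ?_⟩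
          · have h1 := posg i
            have h2' : (0 : ℤ) ≤ (i.val : ℤ) := Int.natCast_nonneg _
            nlinarith
          · have h1 := posg ⟨1, by omega⟩
            have : ((1 : ℕ) : ℤ) = 1 := rfl
            simp only [this]
            nlinarith
        linarith
    obtain ⟨a, rfl⟩ := List.length_eq_one_iff.mp hlen
    simp at hsum
    rw [hsum]
  · rintro rfl
    unfold kappa
    simp
    omega
end

section
/- For every partition λ of d ≥ 2 with λ ≠ (d), one has κ_λ ≤ (d−1)(d−2) − 2. In particular, there is no partition λ of d with (d−1)(d−2) < κ_λ < d(d−1). -/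
lemma sum_sq_le (t : List ℤ) (h : ∀ x ∈ t, 0 ≤ x) :
    (∑ i : Fin t.length, t.get i * t.get i) ≤ t.sum * t.sum := by
  induction t with
  | nil => simp
  | cons a s ih =>
    have ha : 0 ≤ a := h a (by simp)
    have hs : 0 ≤ s.sum := List.sum_nonneg fun x hx => h x (by simp [hx])
    have := ih (fun x hx => h x (by simp [hx]))
    simp only [List.length_cons, Fin.sum_univ_succ, List.get, List.sum_cons]
    show a * a + ∑ i : Fin s.length, s.get i * s.get i ≤ (a + s.sum) * (a + s.sum)
    nlinarith

lemma kappa_cons (a : ℤ) (t : List ℤ) :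
    kappa (a :: t) = a * (a - 1) +
      ∑ i : Fin t.length, t.get i * (t.get i - 2 * ((i.val : ℤ) + 2) + 1) := by
  simp only [kappa, List.length_cons, Fin.sum_univ_succ, List.get_cons_zero,
    List.get_cons_succ, Fin.val_succ, Fin.val_zero]
  push_cast
  have hsumeq : ∑ x : Fin t.length,
      (a :: t).get x.succ * ((a :: t).get x.succ - 2 * ((x.val : ℤ) + 1 + 1) + 1)
      = ∑ i : Fin t.length, t.get i * (t.get i - 2 * ((i.val : ℤ) + 2) + 1) :=
    Finset.sum_congr rfl fun i _ => by
      have h : (a :: t).get i.succ = t.get i := rfl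
      rw [h]; ring
  rw [hsumeq]; ring

/-- For every partition `λ` of `d ≥ 2` with `λ ≠ (d)`, `κ_λ ≤ (d-1)(d-2) - 2`; in
particular no partition of `d` has `(d-1)(d-2) < κ_λ < d(d-1)`. -/
theorem kappa_gap (d : ℕ) (hd : 2 ≤ d) :
    (∀ l : List ℤ, IsPartition l → l.sum = (d : ℤ) → l ≠ [(d : ℤ)] →
        kappa l ≤ ((d : ℤ) - 1) * ((d : ℤ) - 2) - 2) ∧
    (∀ l : List ℤ, IsPartition l → l.sum = (d : ℤ) →
        ¬(((d : ℤ) - 1) * ((d : ℤ) - 2) < kappa l ∧ kappa l < (d : ℤ) * ((d : ℤ) - 1))) := by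
  have main : ∀ l : List ℤ, IsPartition l → l.sum = (d : ℤ) → l ≠ [(d : ℤ)] →
      kappa l ≤ ((d : ℤ) - 1) * ((d : ℤ) - 2) - 2 := by
    intro l ⟨hsort, hpos⟩ hsum hne
    have hd2 : (2:ℤ) ≤ (d:ℤ) := by exact_mod_cast hd
    match l with
    | [] => simp at hsum; omega
    | [a] =>
      exfalso; apply hne; simp at hsum; rw [hsum]
    | a :: b :: t =>
      set s : List ℤ := b :: t with hs
      have hsne : s ≠ [] := by simp [hs]
      have hspos : ∀ x ∈ s, 0 < x := fun x hx => hpos x (by simp [hs, List.mem_cons] at hx ⊢; tauto)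
      have hbpos : 0 < s.sum := List.sum_pos s hspos hsne
      have ha : 0 < a := hpos a (by simp)
      have hab : a + s.sum = (d:ℤ) := by simpa [hs] using hsum
      rw [kappa_cons]
      have step1 : (∑ i : Fin s.length, s.get i * (s.get i - 2 * ((i.val : ℤ) + 2) + 1))
          ≤ (∑ i : Fin s.length, s.get i * s.get i) - 3 * s.sum := by
        have hsum' : s.sum = ∑ i : Fin s.length, s.get i := by
          rw [← Fin.sum_univ_getElem]; rfl
        rw [hsum', Finset.mul_sum, ← Finset.sum_sub_distrib]
        apply Finset.sum_le_sum
        intro i _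
        have hgi : 0 < s.get i := hspos _ (s.get_mem i)
        have hi : (0:ℤ) ≤ (i.val : ℤ) := by positivity
        nlinarith
      have step2 := sum_sq_le s (fun x hx => le_of_lt (hspos x hx))
      nlinarith
  refine ⟨main, ?_⟩
  intro l hp hsum ⟨h1, h2⟩
  by_cases hl : l = [(d : ℤ)]
  · subst hl
    have : kappa [(d:ℤ)] = (d:ℤ) * ((d:ℤ) - 1) := by
      simp [kappa]; omega
    rw [this] at h2
    exact absurd h2 (lt_irrefl _)
  · have := main l hp hsum hl
    linarith
end

section
/- For every integer n ≥ 0, Σ_{j=0}^{n} (−1)^j · C(n,j) · (n − 2j)^n = 2^n · n!. -/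
open Finset Nat Function fwdDiff

/-- The `n`-th forward difference of `x ↦ x^k` at `0` is `n!` if `k = n` and `0` if `k < n`. -/
lemma fwdDiff_iter_pow_zero : ∀ n k : ℕ, k ≤ n →
    (fwdDiff (1:ℕ))^[n] (fun x : ℕ ↦ (x : ℤ) ^ k) 0 = if k = n then (n.factorial : ℤ) else 0 := by
  intro n
  induction n with
  | zero =>
      intro k hk
      interval_cases k
      simp
  | succ n IH =>
      intro k hk
      rw [Function.iterate_succ_apply]
      cases k with
      | zero =>
          have h0 : fwdDiff (1:ℕ) (fun x : ℕ ↦ (x : ℤ) ^ 0) = fun _ ↦ (0 : ℤ) := by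
            funext x; simp [fwdDiff]
          rw [h0]
          have : (fwdDiff (1:ℕ))^[n] (fun _ : ℕ ↦ (0 : ℤ)) 0 = 0 := by
            rw [fwdDiff_iter_eq_sum_shift]; simp
          rw [this]
          simp [Nat.succ_ne_zero]
      | succ m =>
          have hΔ : fwdDiff (1:ℕ) (fun x : ℕ ↦ (x : ℤ) ^ (m + 1))
              = fun x : ℕ ↦ ∑ i ∈ range (m + 1), ((m+1).choose i : ℤ) * x ^ i := by
            funext x
            simp only [fwdDiff]
            push_cast
            rw [add_pow]
            rw [Finset.sum_range_succ]
            simp [mul_comm]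
          rw [hΔ]
          have hsum : (fwdDiff (1:ℕ))^[n] (fun x : ℕ ↦ ∑ i ∈ range (m + 1),
                ((m+1).choose i : ℤ) * x ^ i) 0
              = ∑ i ∈ range (m + 1), ((m+1).choose i : ℤ)
                  * (fwdDiff (1:ℕ))^[n] (fun x : ℕ ↦ (x : ℤ) ^ i) 0 := by
            have : (fun x : ℕ ↦ ∑ i ∈ range (m + 1), ((m+1).choose i : ℤ) * x ^ i)
                = ∑ i ∈ range (m + 1),
                    (((m+1).choose i : ℤ) • fun x : ℕ ↦ (x : ℤ) ^ i) := by
              funext x; simp [Finset.sum_apply]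
            rw [this, fwdDiff_iter_finset_sum]
            simp only [Finset.sum_apply, fwdDiff_iter_const_smul, Pi.smul_apply, smul_eq_mul]
          rw [hsum]
          have hIH : ∀ i ∈ range (m + 1), ((m+1).choose i : ℤ)
                  * (fwdDiff (1:ℕ))^[n] (fun x : ℕ ↦ (x : ℤ) ^ i) 0
              = ((m+1).choose i : ℤ) * (if i = n then (n.factorial : ℤ) else 0) := by
            intro i hi
            rw [IH i (by simp at hi; omega)]
          rw [Finset.sum_congr rfl hIH]
          by_cases hm : m = n
          · subst hm
            rw [Finset.sum_eq_single m]
            · simp [Nat.choose_succ_self_right, Nat.factorial_succ]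
            · intro b hb hbne
              simp [hbne]
            · intro h; simp at h
          · have hmn : m < n := by omega
            have : ∀ i ∈ range (m + 1),
                ((m+1).choose i : ℤ) * (if i = n then (n.factorial : ℤ) else 0) = 0 := by
              intro i hi
              simp at hi
              have : i ≠ n := by omega
              simp [this]
            rw [Finset.sum_eq_zero this]
            have : m + 1 ≠ n + 1 := by omega
            simp [this, hm]

/-- Alternating binomial sum of `j^k` vanishes for `k < n` and equals `(-1)^n n!` for `k = n`. -/
lemma alt_sum_pow (n k : ℕ) (hk : k ≤ n) :
    ∑ j ∈ range (n + 1), (-1 : ℤ) ^ j * (n.choose j : ℤ) * (j : ℤ) ^ k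
      = if k = n then (-1 : ℤ) ^ n * n.factorial else 0 := by
  have H := fwdDiff_iter_eq_sum_shift (1 : ℕ) (fun x : ℕ ↦ (x : ℤ) ^ k) n 0
  rw [fwdDiff_iter_pow_zero n k hk] at H
  have key : (-1 : ℤ) ^ n * (if k = n then (n.factorial : ℤ) else 0)
      = ∑ j ∈ range (n + 1), (-1 : ℤ) ^ n * (((-1 : ℤ) ^ (n - j) * n.choose j) • ((0 + j • 1 : ℕ) : ℤ) ^ k) := by
    rw [← Finset.mul_sum, ← H]
  have : ∀ j ∈ range (n + 1),
      (-1 : ℤ) ^ n * (((-1 : ℤ) ^ (n - j) * n.choose j) • ((0 + j • 1 : ℕ) : ℤ) ^ k)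
      = (-1 : ℤ) ^ j * (n.choose j : ℤ) * (j : ℤ) ^ k := by
    intro j hj
    simp only [Finset.mem_range] at hj
    have hjn : j ≤ n := by omega
    have hpow : (-1 : ℤ) ^ n * (-1 : ℤ) ^ (n - j) = (-1 : ℤ) ^ j := by
      have : (-1 : ℤ) ^ n = (-1 : ℤ) ^ (n - j) * (-1 : ℤ) ^ j := by
        rw [← pow_add]; congr 1; omega
      have h2 : (-1 : ℤ) ^ (n - j) * (-1 : ℤ) ^ (n - j) = 1 := by
        rw [← pow_add, ← two_mul, pow_mul]; norm_num
      rw [this, mul_comm ((-1:ℤ)^(n-j)) ((-1:ℤ)^j), mul_assoc, h2, mul_one]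
    simp only [smul_eq_mul, zero_add, smul_eq_mul, mul_one]
    rw [show ((-1:ℤ)^n * ((-1:ℤ)^(n-j) * (n.choose j : ℤ) * (j:ℤ)^k))
        = ((-1:ℤ)^n * (-1:ℤ)^(n-j)) * (n.choose j : ℤ) * (j:ℤ)^k by ring, hpow]
  rw [Finset.sum_congr rfl this] at key
  rw [← key]
  by_cases h : k = n <;> simp [h]

/-- For every `n ≥ 0`, `Σ_{j=0}^{n} (-1)^j C(n,j) (n-2j)^n = 2^n · n!`. -/
theorem alternating_sum_pow_eq_two_pow_mul_factorial (n : ℕ) :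
    ∑ j ∈ Finset.range (n + 1),
        ((-1 : ℤ) ^ j * (n.choose j : ℤ) * ((n : ℤ) - 2 * j) ^ n)
      = 2 ^ n * (n.factorial : ℤ) := by
  have expand : ∀ j : ℕ, ((n : ℤ) - 2 * j) ^ n
      = ∑ k ∈ range (n + 1), (-2 * j : ℤ) ^ k * (n : ℤ) ^ (n - k) * (n.choose k : ℤ) := by
    intro j
    rw [show ((n : ℤ) - 2 * j) = (-2 * j) + n by ring, add_pow]
  calc ∑ j ∈ Finset.range (n + 1),
        ((-1 : ℤ) ^ j * (n.choose j : ℤ) * ((n : ℤ) - 2 * j) ^ n)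
      = ∑ j ∈ range (n + 1), ∑ k ∈ range (n + 1),
          ((-2 : ℤ) ^ k * (n : ℤ) ^ (n - k) * (n.choose k : ℤ))
            * ((-1 : ℤ) ^ j * (n.choose j : ℤ) * (j : ℤ) ^ k) := by
        refine Finset.sum_congr rfl fun j _ ↦ ?_
        rw [expand j, Finset.mul_sum]
        refine Finset.sum_congr rfl fun k _ ↦ ?_
        rw [mul_pow]
        ring
    _ = ∑ k ∈ range (n + 1),
          ((-2 : ℤ) ^ k * (n : ℤ) ^ (n - k) * (n.choose k : ℤ))
            * ∑ j ∈ range (n + 1), ((-1 : ℤ) ^ j * (n.choose j : ℤ) * (j : ℤ) ^ k) := by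
        rw [Finset.sum_comm]
        refine Finset.sum_congr rfl fun k _ ↦ ?_
        rw [Finset.mul_sum]
    _ = 2 ^ n * (n.factorial : ℤ) := by
        have : ∀ k ∈ range (n + 1),
            ((-2 : ℤ) ^ k * (n : ℤ) ^ (n - k) * (n.choose k : ℤ))
              * ∑ j ∈ range (n + 1), ((-1 : ℤ) ^ j * (n.choose j : ℤ) * (j : ℤ) ^ k)
            = ((-2 : ℤ) ^ k * (n : ℤ) ^ (n - k) * (n.choose k : ℤ))
              * (if k = n then (-1 : ℤ) ^ n * n.factorial else 0) := by
          intro k hk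
          simp only [Finset.mem_range] at hk
          rw [alt_sum_pow n k (by omega)]
        rw [Finset.sum_congr rfl this, Finset.sum_eq_single n]
        · have h2 : (-2:ℤ)^n * ((-1)^n * (n.factorial:ℤ)) = 2^n * n.factorial := by
            rw [← mul_assoc, ← mul_pow]; norm_num
          simpa using h2
        · intro b hb hbne; simp [hbne]
        · intro h; simp at h
end

section
/- For every integer n ≥ 1, Σ_{k=1}^{n} (−1)^{n−k} · k^{2n} / ((n−k)! · (n+k)!) = 1/2. -/
open Finset fwdDiff

lemma fwdDiff_pow_eq (i : ℕ) :
    Δ_[(1:ℤ)] (fun x : ℤ ↦ (x:ℚ)^i)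
      = ∑ j ∈ Finset.range i, (i.choose j : ℚ) • (fun x : ℤ ↦ (x:ℚ)^j) := by
  funext x
  simp only [fwdDiff, Finset.sum_apply, Pi.smul_apply, smul_eq_mul]
  have hx : ((x + 1 : ℤ) : ℚ) = (x:ℚ) + 1 := by push_cast; ring
  rw [hx, add_pow, Finset.sum_range_succ]
  simp [mul_comm]

lemma fwdDiff_pow_lt : ∀ k : ℕ, ∀ i : ℕ, i < k →
    (fwdDiff (1:ℤ))^[k] (fun x : ℤ ↦ (x:ℚ)^i) = fun _ ↦ 0 := by
  intro k
  induction k with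
  | zero => intro i hi; omega
  | succ k IH =>
    intro i hi
    rw [Function.iterate_succ_apply, fwdDiff_pow_eq, fwdDiff_iter_finset_sum]
    funext y
    rw [Finset.sum_apply]
    apply Finset.sum_eq_zero
    intro j hj
    rw [fwdDiff_iter_const_smul, IH j (by simp at hj; omega)]
    simp

lemma fwdDiff_pow_self : ∀ m : ℕ,
    (fwdDiff (1:ℤ))^[m] (fun x : ℤ ↦ (x:ℚ)^m) = fun _ ↦ (m.factorial : ℚ) := by
  intro m
  induction m with
  | zero => funext y; simp
  | succ m IH =>
    rw [Function.iterate_succ_apply, fwdDiff_pow_eq, fwdDiff_iter_finset_sum,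
      Finset.sum_range_succ]
    funext y
    rw [Pi.add_apply, Finset.sum_apply]
    rw [Finset.sum_eq_zero (fun j hj => by
      rw [fwdDiff_iter_const_smul, fwdDiff_pow_lt m j (by simpa using hj)]; simp)]
    rw [fwdDiff_iter_const_smul, IH]
    simp [Nat.factorial_succ]

/-- For every `n ≥ 1`, `Σ_{k=1}^{n} (-1)^{n-k} k^{2n} / ((n-k)!(n+k)!) = 1/2`. -/
theorem sum_eq_half (n : ℕ) (hn : 1 ≤ n) :
    ∑ k ∈ Finset.Icc 1 n,
        ((-1 : ℚ) ^ (n - k) * (k : ℚ) ^ (2 * n) /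
          (((n - k).factorial : ℚ) * ((n + k).factorial : ℚ)))
      = 1 / 2 := by
  set G : ℕ → ℚ := fun j ↦ (-1:ℚ)^(2*n-j) * ((2*n).choose j : ℚ) * ((j:ℚ) - n)^(2*n) with hG
  set F : ℕ → ℚ := fun k ↦ (-1 : ℚ) ^ (n - k) * (k : ℚ) ^ (2 * n) /
          (((n - k).factorial : ℚ) * ((n + k).factorial : ℚ)) with hF
  have key := fwdDiff_iter_eq_sum_shift (1:ℤ) (fun x : ℤ ↦ (x:ℚ)^(2*n)) (2*n) (-(n:ℤ))
  rw [fwdDiff_pow_self] at key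
  have key2 : ((2*n).factorial : ℚ) = ∑ j ∈ Finset.range (2*n+1), G j := by
    refine Eq.trans key ?_
    apply Finset.sum_congr rfl
    intro j hj
    simp only [hG, zsmul_eq_mul, smul_eq_mul]
    push_cast
    ring_nf
    norm_cast
  -- split sum
  have hsplit : ∑ j ∈ Finset.range (2*n+1), G j
      = ∑ i ∈ Finset.range n, G i + ∑ j ∈ Finset.Ico n (2*n+1), G j := by
    rw [Finset.sum_range_add_sum_Ico _ (by omega)]
  have h2 : ∑ j ∈ Finset.Ico n (2*n+1), G j = ∑ i ∈ Finset.range (n+1), G (n + i) := by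
    rw [Finset.sum_Ico_eq_sum_range, show 2*n+1-n = n+1 from by omega]
  have h3 : ∑ i ∈ Finset.range (n+1), G (n + i)
      = ∑ i ∈ Finset.range n, G (n + (i+1)) + G (n + 0) := by
    rw [Finset.sum_range_succ']
  have hGn : G (n + 0) = 0 := by
    rw [Nat.add_zero]
    simp only [hG]
    have : ((n:ℚ) - n) = 0 := by ring
    rw [this, zero_pow (by omega)]
    ring
  have h1 : ∑ i ∈ Finset.range n, G i = ∑ i ∈ Finset.range n, G (n - 1 - i) :=
    (Finset.sum_range_reflect G n).symm
  have hbig : ((2*n).factorial : ℚ)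
      = ∑ i ∈ Finset.range n, (G (n - 1 - i) + G (n + (i+1))) := by
    rw [key2, hsplit, h2, h3, h1, hGn, add_zero, ← Finset.sum_add_distrib]
  -- termwise identity
  have hterm : ∀ i ∈ Finset.range n, G (n - 1 - i) + G (n + (i+1))
      = 2 * ((2*n).factorial : ℚ) * F (1 + i) := by
    intro i hi
    simp only [Finset.mem_range] at hi
    set k := i + 1 with hk
    have hkn : k ≤ n := by omega
    have h1k : 1 + i = k := by omega
    have hnk : n - 1 - i = n - k := by omega
    have hnk2 : n + (i+1) = n + k := by omega
    have hch : (2*n).choose (n - k) = (2*n).choose (n + k) := by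
      have := Nat.choose_symm (show n + k ≤ 2*n by omega)
      rwa [show 2*n - (n+k) = n - k by omega] at this
    have hfact : ((2*n).choose (n+k)) * (n+k).factorial * (n-k).factorial
        = (2*n).factorial := by
      have := Nat.choose_mul_factorial_mul_factorial (show n + k ≤ 2*n by omega)
      rwa [show 2*n - (n+k) = n - k by omega] at this
    have hcast1 : ((n - k : ℕ) : ℚ) = (n : ℚ) - k := by
      rw [Nat.cast_sub hkn]
    have e1 : 2*n - (n - k) = n + k := by omega
    have e2 : 2*n - (n + k) = n - k := by omega
    have hsign : (-1:ℚ)^(n+k) = (-1:ℚ)^(n-k) := by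
      rw [show n + k = (n - k) + 2*k by omega, pow_add, pow_mul]
      simp
    have hnegpow : (((n - k : ℕ) : ℚ) - n)^(2*n) = (k:ℚ)^(2*n) := by
      rw [hcast1, show (n:ℚ) - k - n = -(k:ℚ) by ring, pow_mul, neg_pow, pow_mul]
      simp
    simp only [hG, hF, hnk, hnk2, h1k, e1, e2, hnegpow, hch, hsign]
    have hcast2 : (((n + k : ℕ) : ℚ) - n) = (k:ℚ) := by push_cast; ring
    rw [hcast2]
    have hne1 : ((n - k).factorial : ℚ) ≠ 0 := Nat.cast_ne_zero.mpr (Nat.factorial_ne_zero _)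
    have hne2 : ((n + k).factorial : ℚ) ≠ 0 := Nat.cast_ne_zero.mpr (Nat.factorial_ne_zero _)
    have hfactq : ((2*n).choose (n+k) : ℚ) * (n+k).factorial * (n-k).factorial
        = ((2*n).factorial : ℚ) := by exact_mod_cast congrArg (Nat.cast : ℕ → ℚ) hfact
    field_simp
    linear_combination (2 * (k:ℚ)^(2*n)) * hfactq
  rw [Finset.sum_congr rfl hterm, ← Finset.mul_sum] at hbig
  -- convert target sum to range form
  have htgt : ∑ k ∈ Finset.Icc 1 n, F k = ∑ i ∈ Finset.range n, F (1 + i) := by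
    rw [show Finset.Icc 1 n = Finset.Ico 1 (n+1) by rfl, Finset.sum_Ico_eq_sum_range,
      show n+1-1 = n from rfl]
  have hfne : ((2*n).factorial : ℚ) ≠ 0 := Nat.cast_ne_zero.mpr (Nat.factorial_ne_zero _)
  show ∑ k ∈ Finset.Icc 1 n, F k = 1 / 2
  rw [htgt]
  have : (2 * ((2*n).factorial : ℚ)) * ∑ i ∈ Finset.range n, F (1 + i)
      = (2 * ((2*n).factorial : ℚ)) * (1/2) := by
    rw [← hbig]; ring
  exact mul_left_cancel₀ (by positivity) this
end

section
/- For every integer d ≥ 1 and every real (or rational) x such that 1 + jx ≠ 0 for all integers j with 1−d ≤ j ≤ d−1, the following identity holds: Σ_{m,n ≥ 0, m+n = d−1} ( (−1)^n / (m! · n!) ) · Π_{j=−m}^{n} 1/(1 + j·x) = d · Cat(d−1) · x^{d−1} / Π_{i=1}^{d−1} (1 − i²x²), where Cat(d−1) = (2d−2)! / ((d−1)! · d!) is the (d−1)-st Catalan number. -/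
open Finset

private lemma prod_Icc_int (f : ℤ → ℚ) (a : ℤ) (k : ℕ) :
    ∏ j ∈ Finset.Icc a (a + (k : ℤ)), f j = ∏ i ∈ Finset.range (k + 1), f (a + (i : ℤ)) := by
  induction k with
  | zero => simp
  | succ k ih =>
    have h : Finset.Icc a (a + ((k + 1 : ℕ) : ℤ)) =
        insert (a + (k : ℤ) + 1) (Finset.Icc a (a + (k : ℤ))) := by
      ext j
      simp only [Finset.mem_Icc, Finset.mem_insert]
      push_cast
      omega
    have h2 : a + ((k + 1 : ℕ) : ℤ) = a + (k : ℤ) + 1 := by push_cast; ring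
    rw [h, Finset.prod_insert (by simp), ih]
    conv_rhs => rw [Finset.prod_range_succ]
    rw [h2, mul_comm]

private lemma vand (m : ℕ) (B X : ℚ) : ∀ C : ℚ,
    ∑ n ∈ range (m + 1), (-1 : ℚ) ^ n * (m.choose n : ℚ) *
        (∏ i ∈ range n, (B + (i : ℚ) * X)) * (∏ i ∈ Ico n m, (C + (i : ℚ) * X))
      = ∏ i ∈ range m, (C - B + (i : ℚ) * X) := by
  induction m with
  | zero => intro C; simp
  | succ m ih =>
    intro C
    have hQ : ∀ n : ℕ, ∏ i ∈ Ico (n + 1) (m + 1), (C + (i : ℚ) * X)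
        = ∏ i ∈ Ico n m, (C + X + (i : ℚ) * X) := by
      intro n
      rw [Finset.prod_Ico_eq_prod_range, Finset.prod_Ico_eq_prod_range]
      have h : m + 1 - (n + 1) = m - n := by omega
      rw [h]
      refine Finset.prod_congr rfl fun i _ => ?_
      push_cast; ring
    have key : ∀ n : ℕ, (-1 : ℚ) ^ (n + 1) * ((m + 1).choose (n + 1) : ℚ) *
          (∏ i ∈ range (n + 1), (B + (i : ℚ) * X)) *
          (∏ i ∈ Ico (n + 1) (m + 1), (C + (i : ℚ) * X))
        = ((-1 : ℚ) ^ (n + 1) * (m.choose (n + 1) : ℚ) *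
            (∏ i ∈ range (n + 1), (B + (i : ℚ) * X)) *
            (∏ i ∈ Ico (n + 1) (m + 1), (C + (i : ℚ) * X)))
          - ((-1 : ℚ) ^ n * (m.choose n : ℚ) * (B + (n : ℚ) * X) *
            (∏ i ∈ range n, (B + (i : ℚ) * X)) *
            (∏ i ∈ Ico (n + 1) (m + 1), (C + (i : ℚ) * X))) := by
      intro n
      rw [Nat.choose_succ_succ, Nat.cast_add, Finset.prod_range_succ]
      ring
    rw [Finset.sum_range_succ']
    simp only [key]
    rw [Finset.sum_sub_distrib, sub_add_eq_add_sub]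
    have hw : (∑ n ∈ range (m + 1),
          ((-1 : ℚ) ^ (n + 1) * (m.choose (n + 1) : ℚ) *
            (∏ i ∈ range (n + 1), (B + (i : ℚ) * X)) *
            (∏ i ∈ Ico (n + 1) (m + 1), (C + (i : ℚ) * X))))
        + (-1 : ℚ) ^ 0 * (((m + 1).choose 0 : ℕ) : ℚ) *
            (∏ i ∈ range 0, (B + (i : ℚ) * X)) * (∏ i ∈ Ico 0 (m + 1), (C + (i : ℚ) * X))
        = ∑ n ∈ range (m + 1),
            ((-1 : ℚ) ^ n * (m.choose n : ℚ) * (∏ i ∈ range n, (B + (i : ℚ) * X)) *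
              (∏ i ∈ Ico n (m + 1), (C + (i : ℚ) * X))) := by
      have h0 : (-1 : ℚ) ^ 0 * (((m + 1).choose 0 : ℕ) : ℚ) *
            (∏ i ∈ range 0, (B + (i : ℚ) * X)) * (∏ i ∈ Ico 0 (m + 1), (C + (i : ℚ) * X))
          = (-1 : ℚ) ^ 0 * ((m.choose 0 : ℕ) : ℚ) *
            (∏ i ∈ range 0, (B + (i : ℚ) * X)) * (∏ i ∈ Ico 0 (m + 1), (C + (i : ℚ) * X)) := by
        simp
      rw [h0, ← Finset.sum_range_succ' (fun n => (-1 : ℚ) ^ n * (m.choose n : ℚ) *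
          (∏ i ∈ range n, (B + (i : ℚ) * X)) * (∏ i ∈ Ico n (m + 1), (C + (i : ℚ) * X))) (m + 1),
        Finset.sum_range_succ]
      simp
    rw [hw]
    have hsplit : ∀ n ∈ range (m + 1),
        ((-1 : ℚ) ^ n * (m.choose n : ℚ) * (∏ i ∈ range n, (B + (i : ℚ) * X)) *
            (∏ i ∈ Ico n (m + 1), (C + (i : ℚ) * X)))
          - ((-1 : ℚ) ^ n * (m.choose n : ℚ) * (B + (n : ℚ) * X) *
            (∏ i ∈ range n, (B + (i : ℚ) * X)) * (∏ i ∈ Ico (n + 1) (m + 1), (C + (i : ℚ) * X)))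
        = (C - B) * ((-1 : ℚ) ^ n * (m.choose n : ℚ) * (∏ i ∈ range n, (B + (i : ℚ) * X)) *
            (∏ i ∈ Ico n m, (C + X + (i : ℚ) * X))) := by
      intro n hn
      rw [Finset.prod_eq_prod_Ico_succ_bot (by simpa using Finset.mem_range.mp hn)
        (fun i => (C + (i : ℚ) * X)), hQ n]
      ring
    rw [← Finset.sum_sub_distrib, Finset.sum_congr rfl hsplit, ← Finset.mul_sum, ih (C + X),
      Finset.prod_range_succ' (fun i => (C - B + (i : ℚ) * X)) m]
    have hcong : ∏ i ∈ range m, (C + X - B + (i : ℚ) * X)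
        = ∏ i ∈ range m, (C - B + ((i : ℚ) + 1) * X) :=
      Finset.prod_congr rfl fun i _ => by ring
    rw [hcong]
    push_cast
    ring


private lemma asc_prod (m : ℕ) : ∀ k : ℕ, m.factorial * ∏ i ∈ range k, (m + 1 + i) = (m + k).factorial := by
  intro k
  induction k with
  | zero => simp
  | succ k ih =>
    rw [Finset.prod_range_succ, ← mul_assoc, ih]
    have : m + (k + 1) = (m + k) + 1 := by omega
    rw [this, Nat.factorial_succ]
    ring


/-- The one-point generating function of monotone Hurwitz numbers:
`Σ_{m+n=d-1} ((-1)^n/(m!n!)) Π_{j=-m}^{n} 1/(1+jx)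
  = d · Cat(d-1) · x^{d-1} / Π_{i=1}^{d-1} (1 - i²x²)`. -/
theorem monotone_one_point_sum (d : ℕ) (hd : 1 ≤ d) (x : ℚ)
    (hx : ∀ j : ℤ, 1 - (d : ℤ) ≤ j → j ≤ (d : ℤ) - 1 → 1 + (j : ℚ) * x ≠ 0) :
    ∑ n ∈ Finset.range d,
        ((-1 : ℚ) ^ n / (((d - 1 - n).factorial : ℚ) * (n.factorial : ℚ)) *
          ∏ j ∈ Finset.Icc (-((d : ℤ) - 1 - n)) (n : ℤ), (1 + (j : ℚ) * x)⁻¹)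
      = (d : ℚ) * (catalan (d - 1) : ℚ) * x ^ (d - 1) /
          ∏ i ∈ Finset.Icc 1 (d - 1), (1 - (i : ℚ) ^ 2 * x ^ 2) := by
  obtain ⟨m, rfl⟩ : ∃ m, d = m + 1 := ⟨d - 1, by omega⟩
  simp only [Nat.add_sub_cancel]
  set D : ℚ := ∏ i ∈ Finset.range (2 * m + 1), (1 + ((i : ℚ) - m) * x) with hDdef
  have hfac : ∀ i : ℕ, i < 2 * m + 1 → 1 + ((i : ℚ) - m) * x ≠ 0 := by
    intro i hi
    have h := hx ((i : ℤ) - m) (by push_cast; omega) (by push_cast; omega)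
    have hc : (((i : ℤ) - (m : ℤ) : ℤ) : ℚ) = (i : ℚ) - m := by push_cast; ring
    rwa [hc] at h
  have hD : D ≠ 0 := by
    rw [hDdef, Finset.prod_ne_zero_iff]
    intro i hi
    exact hfac i (Finset.mem_range.mp hi)
  have hDden : ∏ i ∈ Finset.Icc 1 m, (1 - (i : ℚ) ^ 2 * x ^ 2) = D := by
    have h1 : ∏ i ∈ range m, (1 + ((i : ℚ) - m) * x) = ∏ i ∈ range m, (1 - ((i : ℚ) + 1) * x) := by
      rw [← Finset.prod_range_reflect (fun j => 1 - ((j : ℚ) + 1) * x) m]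
      refine Finset.prod_congr rfl fun i hi => ?_
      have hi' : i < m := Finset.mem_range.mp hi
      have hms : m - 1 - i = m - (i + 1) := by omega
      rw [hms, Nat.cast_sub (by omega)]
      push_cast
      ring
    have hsp : 2 * m + 1 = m + (1 + m) := by omega
    rw [hDdef, hsp, Finset.prod_range_add, Finset.prod_range_add, h1]
    have h2 : ∏ i ∈ range 1, (1 + (((m + i : ℕ) : ℚ) - m) * x) = 1 := by
      simp
    have h3 : ∏ i ∈ range m, (1 + (((m + (1 + i) : ℕ) : ℚ) - m) * x)
        = ∏ i ∈ range m, (1 + ((i : ℚ) + 1) * x) := by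
      refine Finset.prod_congr rfl fun i _ => ?_
      push_cast
      ring
    rw [h2, h3, one_mul, ← Finset.prod_mul_distrib]
    rw [← Finset.Ico_add_one_right_eq_Icc, Finset.prod_Ico_eq_prod_range]
    have h4 : m + 1 - 1 = m := by omega
    rw [h4]
    refine (Finset.prod_congr rfl fun i _ => ?_).symm
    push_cast
    ring
  refine mul_right_cancel₀ hD ?_
  have hterm : ∀ n ∈ Finset.range (m + 1),
      ((-1 : ℚ) ^ n / (((m - n).factorial : ℚ) * (n.factorial : ℚ)) *
          ∏ j ∈ Finset.Icc (-(((m + 1 : ℕ) : ℤ) - 1 - n)) (n : ℤ), (1 + (j : ℚ) * x)⁻¹) * D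
      = 1 / (m.factorial : ℚ) *
          ((-1 : ℚ) ^ n * (m.choose n : ℚ) * (∏ i ∈ range n, (1 - (m : ℚ) * x + (i : ℚ) * x)) *
            ∏ i ∈ Ico n m, (1 + x + (i : ℚ) * x)) := by
    intro n hn
    have hn' : n ≤ m := by have := Finset.mem_range.mp hn; omega
    have hIcc : Finset.Icc (-(((m + 1 : ℕ) : ℤ) - 1 - n)) (n : ℤ)
        = Finset.Icc ((n : ℤ) - m) (((n : ℤ) - m) + (m : ℤ)) := by
      congr 1 <;> push_cast <;> ring
    rw [hIcc, prod_Icc_int, Finset.prod_inv_distrib]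
    have hmid : ∏ i ∈ range (m + 1), (1 + ((((n : ℤ) - (m : ℤ)) + (i : ℤ) : ℤ) : ℚ) * x)
        = ∏ i ∈ range (m + 1), (1 + (((n + i : ℕ) : ℚ) - m) * x) := by
      refine Finset.prod_congr rfl fun i _ => ?_
      push_cast
      ring
    have hsp : 2 * m + 1 = n + (m + 1 + (m - n)) := by omega
    have hDsplit : D = (∏ i ∈ range n, (1 + ((i : ℚ) - m) * x)) *
        ((∏ i ∈ range (m + 1), (1 + (((n + i : ℕ) : ℚ) - m) * x)) *
          (∏ i ∈ range (m - n), (1 + (((n + (m + 1 + i) : ℕ) : ℚ) - m) * x))) := by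
      rw [hDdef, hsp, Finset.prod_range_add, Finset.prod_range_add]
    rw [hmid, hDsplit]
    have hMne : ∏ i ∈ range (m + 1), (1 + (((n + i : ℕ) : ℚ) - m) * x) ≠ 0 := by
      rw [Finset.prod_ne_zero_iff]
      intro i hi
      exact hfac (n + i) (by have := Finset.mem_range.mp hi; omega)
    have hL : ∏ i ∈ range n, (1 + ((i : ℚ) - m) * x)
        = ∏ i ∈ range n, (1 - (m : ℚ) * x + (i : ℚ) * x) := by
      refine Finset.prod_congr rfl fun i _ => ?_
      ring
    have hH : ∏ i ∈ range (m - n), (1 + (((n + (m + 1 + i) : ℕ) : ℚ) - m) * x)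
        = ∏ i ∈ Ico n m, (1 + x + (i : ℚ) * x) := by
      rw [Finset.prod_Ico_eq_prod_range]
      refine Finset.prod_congr rfl fun i _ => ?_
      push_cast
      ring
    rw [hL, hH]
    have hchoose : ((m.choose n : ℕ) : ℚ) * (n.factorial : ℚ) * ((m - n).factorial : ℚ)
        = (m.factorial : ℚ) := by
      exact_mod_cast congrArg (Nat.cast (R := ℚ)) (Nat.choose_mul_factorial_mul_factorial hn')
    set M : ℚ := ∏ i ∈ range (m + 1), (1 + (((n + i : ℕ) : ℚ) - m) * x) with hM
    set L : ℚ := ∏ i ∈ range n, (1 - (m : ℚ) * x + (i : ℚ) * x) with hLs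
    set H : ℚ := ∏ i ∈ Ico n m, (1 + x + (i : ℚ) * x) with hHs
    have hfne : ((m - n).factorial : ℚ) * (n.factorial : ℚ) ≠ 0 := by positivity
    have hmfne : (m.factorial : ℚ) ≠ 0 := by positivity
    field_simp
    linear_combination (-(L * H)) * hchoose
  rw [Finset.sum_mul, Finset.sum_congr rfl hterm, ← Finset.mul_sum,
    vand m (1 - (m : ℚ) * x) x (1 + x), ← hDden, div_mul_cancel₀ _ (hDden ▸ hD)]
  have hprod : ∏ i ∈ range m, (1 + x - (1 - (m : ℚ) * x) + (i : ℚ) * x)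
      = ((∏ i ∈ range m, (m + 1 + i) : ℕ) : ℚ) * x ^ m := by
    calc ∏ i ∈ range m, (1 + x - (1 - (m : ℚ) * x) + (i : ℚ) * x)
        = ∏ i ∈ range m, (((m + 1 + i : ℕ) : ℚ) * x) := by
          refine Finset.prod_congr rfl fun i _ => ?_
          push_cast
          ring
      _ = (∏ i ∈ range m, ((m + 1 + i : ℕ) : ℚ)) * x ^ m := by
          rw [Finset.prod_mul_distrib, Finset.prod_const, Finset.card_range]
      _ = ((∏ i ∈ range m, (m + 1 + i) : ℕ) : ℚ) * x ^ m := by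
          rw [Nat.cast_prod]
  rw [hprod]
  have hnat : (∏ i ∈ range m, (m + 1 + i)) = m.factorial * ((m + 1) * catalan m) := by
    have h1 := asc_prod m m
    have h2 : (2 * m).choose m * m.factorial * m.factorial = (2 * m).factorial := by
      have := Nat.choose_mul_factorial_mul_factorial (show m ≤ 2 * m by omega)
      have hsub : 2 * m - m = m := by omega
      rwa [hsub] at this
    have h3 : (m + 1) * catalan m = (2 * m).choose m := by
      rw [succ_mul_catalan_eq_centralBinom, Nat.centralBinom]
    rw [h3]
    have h4 : m + m = 2 * m := by omega
    rw [h4] at h1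
    have := Nat.factorial_pos m
    nlinarith [h1, h2]
  rw [hnat]
  have hmfne : (m.factorial : ℚ) ≠ 0 := by positivity
  push_cast
  field_simp
end

section
/- For every integer d ≥ 2 and every real (or rational) x with 1 − i²x² ≠ 0 for 1 ≤ i ≤ d−1: Cat(d−1) · x^{d−1} / Π_{i=1}^{d−1}(1 − i²x²) = Σ_{k=1}^{d−1} (−1)^{d−1−k} · Cat(d−1) · k^{d−1} / ((d−1−k)! · (d−1+k)!) · ( 1/(1 − kx) + (−1)^{d−1}/(1 + kx) ). -/
open Finset

lemma prodIccCast (m : ℕ) : ∏ i ∈ Icc 1 m, (i:ℚ) = m.factorial := by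
  rw [← Nat.cast_prod]
  norm_cast
  rw [← Finset.Ico_add_one_right_eq_Icc]
  exact Finset.prod_Ico_id_eq_factorial m

lemma prodAdd (c m : ℕ) : ∏ i ∈ Icc 1 m, ((c:ℚ) + i) = (c+m).factorial / c.factorial := by
  induction m with
  | zero =>
    have h : ((c.factorial:ℚ)) ≠ 0 := by positivity
    simp [div_self h]
  | succ m ih =>
    rw [Finset.prod_Icc_succ_top (by omega), ih]
    have h : ((c.factorial:ℚ)) ≠ 0 := by positivity
    field_simp
    push_cast [Nat.factorial_succ, ← Nat.add_assoc]
    ring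

lemma prodSubLow (j : ℕ) : ∏ i ∈ Icc 1 (j-1), ((j:ℚ) - i) = (j-1).factorial := by
  have h : ∏ i ∈ Icc 1 (j-1), ((j:ℚ) - i) = ∏ i ∈ Icc 1 (j-1), (i:ℚ) := by
    apply Finset.prod_nbij' (fun i => j - i) (fun i => j - i)
    · intro a ha; simp only [mem_Icc] at *; omega
    · intro a ha; simp only [mem_Icc] at *; omega
    · intro a ha; simp only [mem_Icc] at ha; omega
    · intro a ha; simp only [mem_Icc] at ha; omega
    · intro a ha; simp only [mem_Icc] at ha
      have : ((j - a : ℕ) : ℚ) = (j:ℚ) - a := by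
        push_cast [Nat.cast_sub (by omega : a ≤ j)]; ring
      rw [this]
  rw [h, prodIccCast]

lemma prodSubHigh (j n : ℕ) (hj : 1 ≤ j) :
    ∏ i ∈ Icc (j+1) n, ((j:ℚ) - i) = (-1)^(n-j) * (n-j).factorial := by
  have h1 : ∏ i ∈ Icc (j+1) n, ((j:ℚ) - i) = ∏ i ∈ Icc (j+1) n, (-1) * ((i:ℚ) - j) := by
    apply Finset.prod_congr rfl; intro i _; ring
  rw [h1, Finset.prod_mul_distrib, Finset.prod_const]
  have hcard : (Icc (j+1) n).card = n - j := by
    rw [Nat.card_Icc]; omega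
  rw [hcard]
  congr 1
  have h : ∏ i ∈ Icc (j+1) n, ((i:ℚ) - j) = ∏ i ∈ Icc 1 (n-j), (i:ℚ) := by
    apply Finset.prod_nbij' (fun i => i - j) (fun i => i + j)
    · intro a ha; simp only [mem_Icc] at *; omega
    · intro a ha; simp only [mem_Icc] at *; omega
    · intro a ha; simp only [mem_Icc] at ha; omega
    · intro a ha; simp only [mem_Icc] at ha; omega
    · intro a ha; simp only [mem_Icc] at ha
      have : ((a - j : ℕ) : ℚ) = (a:ℚ) - j := by
        push_cast [Nat.cast_sub (by omega : j ≤ a)]; ring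
      rw [this]
  rw [h, prodIccCast]

lemma prodIccCast' : True := trivial
lemma eraseSplit (n j : ℕ) (hj : j ∈ Icc 1 n) :
    (Icc 1 n).erase j = Icc 1 (j-1) ∪ Icc (j+1) n := by
  simp only [mem_Icc] at hj
  ext a
  simp only [mem_erase, mem_union, mem_Icc]
  omega

lemma prodDiffSq (n j : ℕ) (hj : j ∈ Icc 1 n) :
    ∏ i ∈ (Icc 1 n).erase j, ((j:ℚ)^2 - (i:ℚ)^2)
      = (-1)^(n-j) * (n-j).factorial * (n+j).factorial / (2 * (j:ℚ)^2) := by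
  simp only [mem_Icc] at hj
  obtain ⟨hj1, hj2⟩ := hj
  have hsplit : ∀ (f : ℕ → ℚ), ∏ i ∈ (Icc 1 n).erase j, f i
      = (∏ i ∈ Icc 1 (j-1), f i) * ∏ i ∈ Icc (j+1) n, f i := by
    intro f
    rw [eraseSplit n j (by simp only [mem_Icc]; omega), Finset.prod_union]
    rw [Finset.disjoint_left]
    intro a ha hb
    simp only [mem_Icc] at ha hb
    omega
  have hfac : ∀ i : ℕ, (j:ℚ)^2 - (i:ℚ)^2 = ((j:ℚ) - i) * ((j:ℚ) + i) := by
    intro i; ring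
  calc ∏ i ∈ (Icc 1 n).erase j, ((j:ℚ)^2 - (i:ℚ)^2)
      = (∏ i ∈ (Icc 1 n).erase j, ((j:ℚ) - i)) * ∏ i ∈ (Icc 1 n).erase j, ((j:ℚ) + i) := by
        rw [← Finset.prod_mul_distrib]
        exact Finset.prod_congr rfl fun i _ => hfac i
    _ = ((j-1).factorial * ((-1)^(n-j) * (n-j).factorial)) *
          ((n+j).factorial / ((j.factorial : ℚ) * (2*j))) := by
        congr 1
        · rw [hsplit, prodSubLow, prodSubHigh j n hj1]
        · have h1 : (∏ i ∈ (Icc 1 n).erase j, ((j:ℚ) + i)) * ((j:ℚ) + j)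
              = ∏ i ∈ Icc 1 n, ((j:ℚ) + i) := Finset.prod_erase_mul _ _ (by simp only [mem_Icc]; omega)
          have h2 : ∏ i ∈ Icc 1 n, ((j:ℚ) + i) = (j+n).factorial / j.factorial := prodAdd j n
          have hjj : (j:ℚ) + j ≠ 0 := by
            have : (0:ℚ) < j := by exact_mod_cast hj1
            positivity
          have := h1.trans h2
          field_simp at this ⊢
          rw [Nat.add_comm n j]
          nlinarith [this]
    _ = (-1)^(n-j) * (n-j).factorial * (n+j).factorial / (2 * (j:ℚ)^2) := by
        have hjfac : (j.factorial : ℚ) = j * (j-1).factorial := by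
          rw_mod_cast [Nat.mul_factorial_pred (by omega : j ≠ 0)]
        have h0 : ((j-1).factorial : ℚ) ≠ 0 := by positivity
        have hjq : (j:ℚ) ≠ 0 := by
          have : (0:ℚ) < j := by exact_mod_cast hj1
          positivity
        rw [hjfac]
        field_simp
lemma sumEval (n j : ℕ) (hj : j ∈ Finset.Icc 1 n) (ε : ℚ) (hε : ε = 1 ∨ ε = -1) :
    ∑ k ∈ Icc 1 n, ((-1:ℚ)^(n-k) * (k:ℚ)^n / ((n-k).factorial * (n+k).factorial)) *
        ((1 + (k:ℚ)*(ε * (j:ℚ)⁻¹)) + (-1:ℚ)^n * (1 - (k:ℚ)*(ε * (j:ℚ)⁻¹))) *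
        ∏ i ∈ (Icc 1 n).erase k, (1 - (i:ℚ)^2 * (ε * (j:ℚ)⁻¹)^2)
      = (ε * (j:ℚ)⁻¹)^n := by
  have hj' := Finset.mem_Icc.mp hj
  have hjq : (j:ℚ) ≠ 0 := by
    have : (0:ℚ) < j := by exact_mod_cast hj'.1
    positivity
  have hε2 : ε^2 = 1 := by rcases hε with h | h <;> simp [h]
  have hy2 : (ε * (j:ℚ)⁻¹)^2 = ((j:ℚ)^2)⁻¹ := by
    rw [mul_pow, hε2, one_mul, inv_pow]
  rw [Finset.sum_eq_single_of_mem j hj]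
  swap
  · intro k hk hkj
    have hjmem : j ∈ (Icc 1 n).erase k := Finset.mem_erase.mpr ⟨Ne.symm hkj, hj⟩
    have hzero : (1 - (j:ℚ)^2 * (ε * (j:ℚ)⁻¹)^2) = 0 := by
      rw [hy2]; field_simp; norm_num
    rw [Finset.prod_eq_zero hjmem hzero, mul_zero]
  -- main term
  have hg : (1 + (j:ℚ)*(ε * (j:ℚ)⁻¹)) + (-1:ℚ)^n * (1 - (j:ℚ)*(ε * (j:ℚ)⁻¹)) = 2 * ε^n := by
    have hje : (j:ℚ) * (ε * (j:ℚ)⁻¹) = ε := by field_simp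
    rw [hje]
    rcases hε with h | h <;> simp [h] <;> ring
  have hD : ∏ i ∈ (Icc 1 n).erase j, (1 - (i:ℚ)^2 * (ε * (j:ℚ)⁻¹)^2)
      = ((-1:ℚ)^(n-j) * (n-j).factorial * (n+j).factorial / (2 * (j:ℚ)^2)) / ((j:ℚ)^2)^(n-1) := by
    have h1 : ∀ i ∈ (Icc 1 n).erase j, (1 - (i:ℚ)^2 * (ε * (j:ℚ)⁻¹)^2)
        = ((j:ℚ)^2 - (i:ℚ)^2) / (j:ℚ)^2 := by
      intro i _
      rw [hy2]; field_simp
    rw [Finset.prod_congr rfl h1, Finset.prod_div_distrib, Finset.prod_const,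
      Finset.card_erase_of_mem hj, Nat.card_Icc]
    rw [prodDiffSq n j hj]
    norm_num
  rw [hg, hD]
  have hF1 : ((n-j).factorial : ℚ) ≠ 0 := by positivity
  have hF2 : ((n+j).factorial : ℚ) ≠ 0 := by positivity
  have hsign : ((-1:ℚ))^(n-j) * ((-1:ℚ))^(n-j) = 1 := by
    rw [← pow_add]
    exact Even.neg_one_pow ⟨n-j, rfl⟩
  have hpow : ((j:ℚ)^2)^(n-1) * (j:ℚ)^2 = (j:ℚ)^n * (j:ℚ)^n := by
    rw [← pow_mul, ← pow_add, ← pow_add]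
    congr 1
    omega
  rw [mul_pow, inv_pow]
  field_simp
  linear_combination (ε^n*(j:ℚ)^n*(j:ℚ)^n) * hsign - ε^n * hpow
open Polynomial in
lemma keyPoly (n : ℕ) (hn : 1 ≤ n) (x : ℚ) :
    x^n = ∑ k ∈ Icc 1 n, ((-1:ℚ)^(n-k) * (k:ℚ)^n / ((n-k).factorial * (n+k).factorial)) *
      ((1 + (k:ℚ)*x) + (-1:ℚ)^n * (1 - (k:ℚ)*x)) *
      ∏ i ∈ (Icc 1 n).erase k, (1 - (i:ℚ)^2 * x^2) := by
  set c : ℕ → ℚ := fun k => (-1:ℚ)^(n-k) * (k:ℚ)^n / ((n-k).factorial * (n+k).factorial) with hc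
  set P : ℚ[X] := X^n with hPdef
  set Q : ℚ[X] := ∑ k ∈ Icc 1 n, C (c k) *
      (((1:ℚ[X]) + C (k:ℚ) * X) + C ((-1:ℚ)^n) * (1 - C (k:ℚ) * X)) *
      ∏ i ∈ (Icc 1 n).erase k, ((1:ℚ[X]) - C ((i:ℚ)^2) * X^2) with hQdef
  set s : Finset ℚ := ((Icc 1 n).image fun j : ℕ => ((j:ℚ))⁻¹) ∪
      ((Icc 1 n).image fun j : ℕ => -((j:ℚ))⁻¹) with hsdef
  have hpos : ∀ j ∈ Icc 1 n, (0:ℚ) < (j:ℚ)⁻¹ := by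
    intro j hj
    have := (Finset.mem_Icc.mp hj).1
    have : (0:ℚ) < j := by exact_mod_cast this
    positivity
  have hinj : Set.InjOn (fun j : ℕ => ((j:ℚ))⁻¹) (Icc 1 n) := by
    intro a _ b _ h
    simp only at h
    have : (a:ℚ) = b := inv_injective h
    exact_mod_cast this
  have hinj2 : Set.InjOn (fun j : ℕ => -((j:ℚ))⁻¹) (Icc 1 n) := by
    intro a ha b hb h
    simp only [neg_inj] at h
    exact hinj ha hb h
  have hdisj : Disjoint ((Icc 1 n).image fun j : ℕ => ((j:ℚ))⁻¹)
      ((Icc 1 n).image fun j : ℕ => -((j:ℚ))⁻¹) := by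
    rw [Finset.disjoint_left]
    intro y hy1 hy2
    simp only [Finset.mem_image] at hy1 hy2
    obtain ⟨a, ha, rfl⟩ := hy1
    obtain ⟨b, hb, hba⟩ := hy2
    have h1 := hpos a ha
    have h2 := hpos b hb
    nlinarith [hba]
  have hcard : s.card = 2*n := by
    rw [hsdef, Finset.card_union_of_disjoint hdisj,
      Finset.card_image_of_injOn hinj, Finset.card_image_of_injOn hinj2, Nat.card_Icc]
    omega
  have hPQ : P = Q := by
    apply Polynomial.eq_of_degrees_lt_of_eval_finset_eq s
    · rw [hcard, hPdef, degree_X_pow]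
      exact_mod_cast by omega
    · rw [hcard, hQdef]
      apply lt_of_le_of_lt (degree_sum_le _ _)
      rw [Finset.sup_lt_iff (by exact_mod_cast WithBot.bot_lt_coe _)]
      intro k hk
      have hg : (((1:ℚ[X]) + C (k:ℚ) * X) + C ((-1:ℚ)^n) * (1 - C (k:ℚ) * X)).degree ≤ 1 := by
        compute_degree
      have hf : ∀ i ∈ (Icc 1 n).erase k, ((1:ℚ[X]) - C ((i:ℚ)^2) * X^2).degree ≤ 2 := by
        intro i _
        compute_degree
      have hprod : (∏ i ∈ (Icc 1 n).erase k, ((1:ℚ[X]) - C ((i:ℚ)^2) * X^2)).degree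
          ≤ ((2*(n-1) : ℕ) : WithBot ℕ) := by
        apply le_trans (degree_prod_le _ _)
        apply le_trans (Finset.sum_le_sum hf)
        rw [Finset.sum_const, Finset.card_erase_of_mem hk, Nat.card_Icc]
        simp only [nsmul_eq_mul]
        norm_cast
        omega
      rw [mul_assoc]
      apply lt_of_le_of_lt (degree_mul_le _ _)
      apply lt_of_le_of_lt (add_le_add degree_C_le (degree_mul_le _ _))
      rw [zero_add]
      apply lt_of_le_of_lt (add_le_add hg hprod)
      rw [show ((1:WithBot ℕ)) = ((1:ℕ):WithBot ℕ) from rfl, ← Nat.cast_add]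
      exact_mod_cast by omega
    · intro y hy
      rw [hsdef] at hy
      simp only [Finset.mem_union, Finset.mem_image] at hy
      have heval : ∀ (j : ℕ), j ∈ Icc 1 n → ∀ ε : ℚ, ε = 1 ∨ ε = -1 →
          eval (ε * (j:ℚ)⁻¹) P = eval (ε * (j:ℚ)⁻¹) Q := by
        intro j hj ε hε
        rw [hPdef, hQdef]
        simp only [eval_pow, eval_X, eval_finset_sum, eval_mul, eval_add, eval_sub,
          eval_one, eval_C, eval_prod]
        exact (sumEval n j hj ε hε).symm
      rcases hy with ⟨j, hj, rfl⟩ | ⟨j, hj, rfl⟩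
      · have := heval j hj 1 (Or.inl rfl)
        simpa using this
      · have := heval j hj (-1) (Or.inr rfl)
        rw [neg_one_mul] at this
        exact this
  have := congrArg (eval x) hPQ
  rw [hPdef, hQdef] at this
  simp only [eval_pow, eval_X, eval_finset_sum, eval_mul, eval_add, eval_sub,
    eval_one, eval_C, eval_prod] at this
  exact this
lemma mainLemma (n : ℕ) (hn : 1 ≤ n) (x : ℚ)
    (hx : ∀ i ∈ Finset.Icc 1 n, 1 - (i : ℚ) ^ 2 * x ^ 2 ≠ 0) :
    x ^ n / ∏ i ∈ Finset.Icc 1 n, (1 - (i : ℚ) ^ 2 * x ^ 2)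
      = ∑ k ∈ Finset.Icc 1 n,
          ((-1:ℚ)^(n-k) * (k:ℚ)^n / ((n-k).factorial * (n+k).factorial)) *
          (1 / (1 - (k : ℚ) * x) + (-1 : ℚ) ^ n / (1 + (k : ℚ) * x)) := by
  have hprodne : (∏ i ∈ Finset.Icc 1 n, (1 - (i : ℚ) ^ 2 * x ^ 2)) ≠ 0 :=
    Finset.prod_ne_zero_iff.mpr hx
  rw [div_eq_iff hprodne, Finset.sum_mul, keyPoly n hn x]
  apply Finset.sum_congr rfl
  intro k hk
  have hfull : ∏ i ∈ Finset.Icc 1 n, (1 - (i : ℚ) ^ 2 * x ^ 2)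
      = (1 - (k:ℚ)^2 * x^2) * ∏ i ∈ (Finset.Icc 1 n).erase k, (1 - (i : ℚ) ^ 2 * x ^ 2) :=
    (Finset.mul_prod_erase _ _ hk).symm
  have h1k : (1 - (k:ℚ)*x) ≠ 0 := by
    intro h
    apply hx k hk
    have : 1 - (k:ℚ)^2 * x^2 = (1-(k:ℚ)*x)*(1+(k:ℚ)*x) := by ring
    rw [this, h, zero_mul]
  have h2k : (1 + (k:ℚ)*x) ≠ 0 := by
    intro h
    apply hx k hk
    have : 1 - (k:ℚ)^2 * x^2 = (1-(k:ℚ)*x)*(1+(k:ℚ)*x) := by ring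
    rw [this, h, mul_zero]
  have hgk : (1/(1 - (k:ℚ)*x) + (-1:ℚ)^n/(1 + (k:ℚ)*x)) * (1 - (k:ℚ)^2*x^2)
      = (1 + (k:ℚ)*x) + (-1:ℚ)^n * (1 - (k:ℚ)*x) := by
    have e : 1 - (k:ℚ)^2*x^2 = (1-(k:ℚ)*x)*(1+(k:ℚ)*x) := by ring
    rw [e]
    field_simp
  rw [hfull, ← hgk]
  ring

/-- Partial fraction decomposition of the monotone single Hurwitz generating function. -/
theorem monotone_partial_fractions (d : ℕ) (hd : 2 ≤ d) (x : ℚ)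
    (hx : ∀ i ∈ Finset.Icc 1 (d - 1), 1 - (i : ℚ) ^ 2 * x ^ 2 ≠ 0) :
    (catalan (d - 1) : ℚ) * x ^ (d - 1) /
        ∏ i ∈ Finset.Icc 1 (d - 1), (1 - (i : ℚ) ^ 2 * x ^ 2)
      = ∑ k ∈ Finset.Icc 1 (d - 1),
          (-1 : ℚ) ^ (d - 1 - k) * (catalan (d - 1) : ℚ) * (k : ℚ) ^ (d - 1) /
            (((d - 1 - k).factorial : ℚ) * ((d - 1 + k).factorial : ℚ)) *
            (1 / (1 - (k : ℚ) * x) + (-1 : ℚ) ^ (d - 1) / (1 + (k : ℚ) * x)) := by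
  have hn : 1 ≤ d - 1 := by omega
  have h := mainLemma (d-1) hn x hx
  rw [mul_div_assoc, h, Finset.mul_sum]
  refine Finset.sum_congr rfl fun k hk => ?_
  ring
end
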